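/- (Lemma 4.1, first inequality) The metric and discrete isoperimetric constants satisfy α(G)/2 ≤ α_d(V), i.e. α(G) ≤ 2·α_d(V). -/

import Mathlib

open scoped Classical ENNReal
open MeasureTheory

noncomputable section

/-- A real function on `[0, L]` which is continuous and piecewise continuously
differentiable: there is a finite partition `0 = x 0 < x 1 < ... < x n = L` such that
on each closed piece the function has a continuous derivative. -/
def PiecewiseC1 (f : ℝ → ℝ) (L : ℝ) : Prop :=
  ContinuousOn f (Set.Icc 0 L) ∧
  ∃ (n : ℕ) (x : Fin (n + 1) → ℝ), x 0 = 0 ∧ x (Fin.last n) = L ∧ StrictMono x ∧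
    ∀ i : Fin n, ∃ g : ℝ → ℝ,
      ContinuousOn g (Set.Icc (x i.castSucc) (x i.succ)) ∧
      ∀ t ∈ Set.Icc (x i.castSucc) (x i.succ),
        HasDerivWithinAt f (g t) (Set.Icc (x i.castSucc) (x i.succ)) t

/-- The underlying (unoriented) simple graph of a set of edges `E` with endpoint
map `ends : E → V × V`. -/
def graphOf {V E : Type} (ends : E → V × V) : SimpleGraph V :=
  SimpleGraph.fromRel fun u v => ∃ e, ends e = (u, v)

/-- A metric graph: a connected, locally finite, simple combinatorial graph with
countably infinite vertex and edge sets, each edge having a finite positive length.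
Each edge carries an (auxiliary) orientation given by `ends`. -/
structure MetricGraph : Type 1 where
  V : Type
  E : Type
  countV : Countable V
  infV : Infinite V
  countE : Countable E
  infE : Infinite E
  ends : E → V × V
  len : E → ℝ
  len_pos : ∀ e, 0 < len e
  no_loops : ∀ e, (ends e).1 ≠ (ends e).2
  no_multi : Function.Injective fun e => Sym2.mk (ends e)
  locfin : ∀ v, {e | (ends e).1 = v ∨ (ends e).2 = v}.Finite
  conn : (graphOf ends).Connected

namespace MetricGraph

/-- The underlying simple graph. -/
def graph (Γ : MetricGraph) : SimpleGraph Γ.V := graphOf Γ.ends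

/-- The star of a vertex: the set of edges incident to it. -/
def star (Γ : MetricGraph) (v : Γ.V) : Set Γ.E :=
  {e | (Γ.ends e).1 = v ∨ (Γ.ends e).2 = v}

/-- Combinatorial degree of a vertex. -/
def degree (Γ : MetricGraph) (v : Γ.V) : ℕ := (Γ.locfin v).toFinset.card

/-- The vertices of a (finite) subgraph given by a finite set of edges. -/
def vertsOf (Γ : MetricGraph) (F : Finset Γ.E) : Finset Γ.V :=
  F.image (fun e => (Γ.ends e).1) ∪ F.image fun e => (Γ.ends e).2

/-- The degree of a vertex inside the subgraph given by the edge set `F`. -/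
def degIn (Γ : MetricGraph) (F : Finset Γ.E) (v : Γ.V) : ℕ :=
  (F.filter fun e => (Γ.ends e).1 = v ∨ (Γ.ends e).2 = v).card

/-- Connectedness of the subgraph spanned by the edge set `F`. -/
def SubConn (Γ : MetricGraph) (F : Finset Γ.E) : Prop :=
  ((SimpleGraph.fromRel fun u v => ∃ e ∈ F, Γ.ends e = (u, v)).induce
    (↑(Γ.vertsOf F) : Set Γ.V)).Connected

/-- A finite connected subgraph (with at least one edge), given by its edge set. -/
def IsFinSubgraph (Γ : MetricGraph) (F : Finset Γ.E) : Prop :=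
  F.Nonempty ∧ Γ.SubConn F

/-- The boundary of a finite subgraph with respect to `Γ`: the vertices whose degree
in the subgraph is strictly smaller than the degree in `Γ`. -/
def bdry (Γ : MetricGraph) (F : Finset Γ.E) : Finset Γ.V :=
  (Γ.vertsOf F).filter fun v => Γ.degIn F v < Γ.degree v

/-- `deg (∂_G G̃)`. -/
def degBdry (Γ : MetricGraph) (F : Finset Γ.E) : ℝ :=
  ∑ v ∈ Γ.bdry F, (Γ.degIn F v : ℝ)

/-- The total length (Lebesgue measure) of a finite subgraph. -/
def mes (Γ : MetricGraph) (F : Finset Γ.E) : ℝ := ∑ e ∈ F, Γ.len e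

/-- The isoperimetric (Cheeger) constant of a metric graph. -/
def alpha (Γ : MetricGraph) : ℝ :=
  sInf {r : ℝ | ∃ F : Finset Γ.E, Γ.IsFinSubgraph F ∧ r = Γ.degBdry F / Γ.mes F}

/-- The isoperimetric constant at infinity, as an element of `[0,∞]`. -/
def alphaEssEnn (Γ : MetricGraph) : ℝ≥0∞ :=
  ⨆ W : Finset Γ.E, ⨅ (F : Finset Γ.E) (_ : Γ.IsFinSubgraph F ∧ Disjoint F W),
    ENNReal.ofReal (Γ.degBdry F / Γ.mes F)

/-- The vertex weight `m(v) = Σ_{e ∈ E_v} |e|`. -/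
def mweight (Γ : MetricGraph) (v : Γ.V) : ℝ :=
  ∑ e ∈ (Γ.locfin v).toFinset, Γ.len e

/-- The set of boundary edges of a vertex set: edges with exactly one endpoint in `X`. -/
def Eb (Γ : MetricGraph) (X : Set Γ.V) : Set Γ.E :=
  {e | Xor' ((Γ.ends e).1 ∈ X) ((Γ.ends e).2 ∈ X)}

/-- The discrete isoperimetric constant of a vertex set `U`. -/
def alphaD (Γ : MetricGraph) (U : Set Γ.V) : ℝ :=
  sInf {r : ℝ | ∃ X : Finset Γ.V, ↑X ⊆ U ∧ X.Nonempty ∧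
    r = ((Γ.Eb ↑X).ncard : ℝ) / ∑ v ∈ X, Γ.mweight v}

/-- The discrete isoperimetric constant at infinity, as an element of `[0,∞]`. -/
def alphaDEssEnn (Γ : MetricGraph) : ℝ≥0∞ :=
  ⨆ X : Finset Γ.V, ENNReal.ofReal (Γ.alphaD (↑X : Set Γ.V)ᶜ)

/-- The combinatorial isoperimetric constant. -/
def alphaComb (Γ : MetricGraph) : ℝ :=
  sInf {r : ℝ | ∃ X : Finset Γ.V, X.Nonempty ∧
    r = ((Γ.Eb ↑X).ncard : ℝ) / ∑ v ∈ X, (Γ.degree v : ℝ)}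

/-- `ℓ*(G) = sup of edge lengths`. -/
def ellSup (Γ : MetricGraph) : ℝ := sSup (Set.range Γ.len)

/-- `ℓ_*(G) = inf of edge lengths`. -/
def ellInf (Γ : MetricGraph) : ℝ := sInf (Set.range Γ.len)

/-- `ℓ*(G)` as an element of `[0,∞]`. -/
def ellSupEnn (Γ : MetricGraph) : ℝ≥0∞ := ⨆ e : Γ.E, ENNReal.ofReal (Γ.len e)

/-- `ℓ*_ess(G) = inf_F sup_{e ∉ F} |e|` as an element of `[0,∞]`. -/
def ellSupEssEnn (Γ : MetricGraph) : ℝ≥0∞ :=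
  ⨅ W : Finset Γ.E, ⨆ e : {e : Γ.E // e ∉ W}, ENNReal.ofReal (Γ.len (e : Γ.E))

/-- Outgoing edges at a vertex (for the fixed orientation). -/
def plusE (Γ : MetricGraph) (v : Γ.V) : Set Γ.E := {e | (Γ.ends e).1 = v}

/-- Incoming edges at a vertex (for the fixed orientation). -/
def minusE (Γ : MetricGraph) (v : Γ.V) : Set Γ.E := {e | (Γ.ends e).2 = v}

/-- The curvature `K(v) = ((#E_v⁺ − #E_v⁻)/#E_v⁺) · inf_{e ∈ E_v⁺} 1/|e|`. -/
def Kcurv (Γ : MetricGraph) (v : Γ.V) : ℝ :=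
  (((Γ.plusE v).ncard : ℝ) - ((Γ.minusE v).ncard : ℝ)) / ((Γ.plusE v).ncard : ℝ) *
    sInf ((fun e => 1 / Γ.len e) '' Γ.plusE v)

/-- The combinatorial curvature `K_comb(v) = 1 − #E_v⁻/#E_v⁺`. -/
def Kcomb (Γ : MetricGraph) (v : Γ.V) : ℝ :=
  1 - ((Γ.minusE v).ncard : ℝ) / ((Γ.plusE v).ncard : ℝ)

/-- `liminf_{v ∈ V} K(v) = sup over finite W of inf_{v ∉ W} K(v)`, in `[0,∞]`. -/
def KcurvEssEnn (Γ : MetricGraph) : ℝ≥0∞ :=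
  ⨆ W : Finset Γ.V, ⨅ v : {v : Γ.V // v ∉ W}, ENNReal.ofReal (Γ.Kcurv (v : Γ.V))

/-- `liminf_{v ∈ V} K_comb(v) = sup over finite W of inf_{v ∉ W} K_comb(v)`. -/
def KcombLiminf (Γ : MetricGraph) : ℝ :=
  sSup (Set.range fun W : Finset Γ.V => sInf (Γ.Kcomb '' (↑W : Set Γ.V)ᶜ))

/-- The value of an edgewise function at an endpoint of an edge. -/
def endVal (Γ : MetricGraph) (f : Γ.E → ℝ → ℝ) (e : Γ.E) (v : Γ.V) : ℝ :=
  if (Γ.ends e).1 = v then f e 0 else f e (Γ.len e)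

/-- A test function on the metric graph `Γ`: a family of continuous, piecewise `C¹`
functions on the edges, matching at the vertices, vanishing on all but finitely
many edges. -/
structure TestFun (Γ : MetricGraph) where
  f : Γ.E → ℝ → ℝ
  piecewise : ∀ e, PiecewiseC1 (f e) (Γ.len e)
  vertexCont : ∀ e e' : Γ.E, ∀ v : Γ.V, e ∈ Γ.star v → e' ∈ Γ.star v →
    Γ.endVal f e v = Γ.endVal f e' v
  finSupp : {e : Γ.E | ∃ x ∈ Set.Icc 0 (Γ.len e), f e x ≠ 0}.Finite

/-- `‖f‖² = Σ_e ∫₀^{|e|} f_e(x)² dx`. -/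
def TestFun.normSq {Γ : MetricGraph} (φ : TestFun Γ) : ℝ :=
  ∑ᶠ e : Γ.E, ∫ x in (0:ℝ)..Γ.len e, (φ.f e x) ^ 2

/-- `‖f′‖² = Σ_e ∫₀^{|e|} f_e′(x)² dx`. -/
def TestFun.energySq {Γ : MetricGraph} (φ : TestFun Γ) : ℝ :=
  ∑ᶠ e : Γ.E, ∫ x in (0:ℝ)..Γ.len e, (deriv (φ.f e) x) ^ 2

/-- A test function is nonzero if it does not vanish identically on the graph. -/
def TestFun.Nonzero {Γ : MetricGraph} (φ : TestFun Γ) : Prop :=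
  ∃ e : Γ.E, ∃ x ∈ Set.Icc 0 (Γ.len e), φ.f e x ≠ 0

/-- The bottom of the spectrum of the Kirchhoff Laplacian, via the variational
(Rayleigh quotient) characterization. -/
def lambda0 (Γ : MetricGraph) : ℝ :=
  sInf {r : ℝ | ∃ φ : TestFun Γ, φ.Nonzero ∧ r = φ.energySq / φ.normSq}

end MetricGraph

/-- A weighted graph `(V, m, b)`: a connected, locally finite, simple combinatorial
graph with countably infinite vertex and edge sets, an edge weight `b` and a vertex
weight `m`. -/
structure WeightedGraph : Type 1 where
  V : Type
  E : Type
  countV : Countable V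
  infV : Infinite V
  countE : Countable E
  infE : Infinite E
  ends : E → V × V
  no_loops : ∀ e, (ends e).1 ≠ (ends e).2
  no_multi : Function.Injective fun e => Sym2.mk (ends e)
  locfin : ∀ v, {e | (ends e).1 = v ∨ (ends e).2 = v}.Finite
  conn : (graphOf ends).Connected
  b : E → ℝ
  b_pos : ∀ e, 0 < b e
  m : V → ℝ
  m_pos : ∀ v, 0 < m v

namespace WeightedGraph

/-- An edge weight `d` is intrinsic if `Σ_{e ∈ E_v} d(e)² b(e) ≤ m(v)` for all `v`. -/
def Intrinsic (Γ : WeightedGraph) (d : Γ.E → ℝ) : Prop :=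
  ∀ v, ∑ e ∈ (Γ.locfin v).toFinset, d e ^ 2 * Γ.b e ≤ Γ.m v

/-- The boundary edges of a vertex set: edges with exactly one endpoint in `X`. -/
def Eb (Γ : WeightedGraph) (X : Set Γ.V) : Set Γ.E :=
  {e | Xor' ((Γ.ends e).1 ∈ X) ((Γ.ends e).2 ∈ X)}

/-- The discrete isoperimetric constant `α_d(U)` with respect to the weight `d`. -/
def alphaD (Γ : WeightedGraph) (d : Γ.E → ℝ) (U : Set Γ.V) : ℝ :=
  sInf {r : ℝ | ∃ X : Finset Γ.V, ↑X ⊆ U ∧ X.Nonempty ∧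
    r = (∑ᶠ e ∈ Γ.Eb ↑X, d e * Γ.b e) / ∑ v ∈ X, Γ.m v}

/-- The discrete isoperimetric constant at infinity, in `[0,∞]`. -/
def alphaDEssEnn (Γ : WeightedGraph) (d : Γ.E → ℝ) : ℝ≥0∞ :=
  ⨆ X : Finset Γ.V, ENNReal.ofReal (Γ.alphaD d (↑X : Set Γ.V)ᶜ)

/-- The energy form `Q(u) = Σ_e b(e) (u(e_i) − u(e_0))²`. -/
def Q (Γ : WeightedGraph) (u : Γ.V → ℝ) : ℝ :=
  ∑ᶠ e : Γ.E, Γ.b e * (u (Γ.ends e).2 - u (Γ.ends e).1) ^ 2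

/-- The squared norm `Σ_v m(v) u(v)²`. -/
def normSqD (Γ : WeightedGraph) (u : Γ.V → ℝ) : ℝ :=
  ∑ᶠ v : Γ.V, Γ.m v * u v ^ 2

/-- The bottom of the spectrum of the Friedrichs extension of the weighted Laplacian,
via the variational characterization over finitely supported functions. -/
def lambda0 (Γ : WeightedGraph) : ℝ :=
  sInf {r : ℝ | ∃ u : Γ.V → ℝ, (Function.support u).Finite ∧ u ≠ 0 ∧
    r = Γ.Q u / Γ.normSqD u}

/-- The bottom of the essential spectrum of the Friedrichs extension, via Glazman's
decomposition principle, in `[0,∞]`. -/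
def lambda0EssEnn (Γ : WeightedGraph) : ℝ≥0∞ :=
  ⨆ X : Finset Γ.V, ⨅ (u : Γ.V → ℝ)
    (_ : (Function.support u).Finite ∧ u ≠ 0 ∧ ∀ v ∈ X, u v = 0),
      ENNReal.ofReal (Γ.Q u / Γ.normSqD u)

end WeightedGraph

end


private lemma MGaux.mem_locfin {Γ : MetricGraph} {v : Γ.V} {e : Γ.E} :
    e ∈ (Γ.locfin v).toFinset ↔ (Γ.ends e).1 = v ∨ (Γ.ends e).2 = v := by
  rw [Set.Finite.mem_toFinset]; rfl

private lemma MGaux.exists_incident (Γ : MetricGraph) (v : Γ.V) :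
    ∃ e, e ∈ (Γ.locfin v).toFinset := by
  haveI := Γ.infV
  obtain ⟨w, hw⟩ := exists_ne v
  obtain ⟨q⟩ := Γ.conn.preconnected v w
  cases q with
  | nil => exact absurd rfl hw
  | cons h q' =>
    rw [graphOf, SimpleGraph.fromRel_adj] at h
    obtain ⟨-, h | h⟩ := h
    · obtain ⟨e, he⟩ := h
      exact ⟨e, MGaux.mem_locfin.2 (Or.inl (by rw [he]))⟩
    · obtain ⟨e, he⟩ := h
      exact ⟨e, MGaux.mem_locfin.2 (Or.inr (by rw [he]))⟩

private lemma MGaux.mweight_pos (Γ : MetricGraph) (v : Γ.V) : 0 < Γ.mweight v := by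
  obtain ⟨e, he⟩ := MGaux.exists_incident Γ v
  exact Finset.sum_pos (fun e _ => Γ.len_pos e) ⟨e, he⟩

private lemma MGaux.ratio_min {ι : Type*} (s : Finset ι) (hs : s.Nonempty) (f g : ι → ℝ)
    (hg : ∀ i ∈ s, 0 < g i) :
    ∃ i ∈ s, f i / g i ≤ (∑ i ∈ s, f i) / (∑ i ∈ s, g i) := by
  by_contra h
  push_neg at h
  have hgs : 0 < ∑ i ∈ s, g i := Finset.sum_pos hg hs
  have key : ∀ i ∈ s, (∑ j ∈ s, f j) / (∑ j ∈ s, g j) * g i < f i := by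
    intro i hi
    exact (lt_div_iff₀ (hg i hi)).1 (h i hi)
  have := Finset.sum_lt_sum_of_nonempty hs key
  rw [← Finset.mul_sum, div_mul_cancel₀ _ (ne_of_gt hgs)] at this
  exact lt_irrefl _ this

/-- **Lemma 4.1 (first inequality).** `α(G) ≤ 2·α_d(V)`. -/
theorem alpha_le_two_mul_alphaD (Γ : MetricGraph) :
    Γ.alpha ≤ 2 * Γ.alphaD Set.univ := by
  classical
  haveI := Γ.infV
  have hSbdd : BddBelow {r : ℝ | ∃ F : Finset Γ.E,
      Γ.IsFinSubgraph F ∧ r = Γ.degBdry F / Γ.mes F} := by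
    refine ⟨0, ?_⟩
    rintro r ⟨F', hF', rfl⟩
    apply div_nonneg
    · exact Finset.sum_nonneg fun v _ => Nat.cast_nonneg _
    · exact Finset.sum_nonneg fun e _ => (Γ.len_pos e).le
  have hTne : {r : ℝ | ∃ X : Finset Γ.V, ↑X ⊆ (Set.univ : Set Γ.V) ∧ X.Nonempty ∧
      r = ((Γ.Eb ↑X).ncard : ℝ) / ∑ v ∈ X, Γ.mweight v}.Nonempty := by
    obtain ⟨v⟩ := (inferInstance : Nonempty Γ.V)
    exact ⟨_, {v}, by simp, Finset.singleton_nonempty v, rfl⟩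
  have main : ∀ t ∈ {r : ℝ | ∃ X : Finset Γ.V, ↑X ⊆ (Set.univ : Set Γ.V) ∧ X.Nonempty ∧
      r = ((Γ.Eb ↑X).ncard : ℝ) / ∑ v ∈ X, Γ.mweight v}, Γ.alpha ≤ 2 * t := by
    rintro t ⟨X, -, hXne, rfl⟩
    set inc : Γ.V → Finset Γ.E := fun v => (Γ.locfin v).toFinset with hincdef
    have mem_inc : ∀ {v e}, e ∈ inc v ↔ ((Γ.ends e).1 = v ∨ (Γ.ends e).2 = v) :=
      fun {v e} => MGaux.mem_locfin
    -- the connectivity relation inside X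
    set stp : Γ.V → Γ.V → Prop := fun u v => u ∈ X ∧ v ∈ X ∧
      ∃ e, Γ.ends e = (u, v) ∨ Γ.ends e = (v, u) with hstpdef
    have hstpsymm : Symmetric stp := by
      rintro u v ⟨hu, hv, e, he⟩
      exact ⟨hv, hu, e, he.symm⟩
    set R : Γ.V → Γ.V → Prop := Relation.ReflTransGen stp with hRdef
    have hRsymm : Symmetric R := fun a b h =>
      (@Relation.ReflTransGen.stdSymm _ stp ⟨hstpsymm⟩).symm a b h
    set C : Γ.V → Finset Γ.V := fun v => X.filter (fun w => R v w) with hCdef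
    have hCX : ∀ v, C v ⊆ X := fun v => Finset.filter_subset _ _
    have hmemC : ∀ v ∈ X, v ∈ C v := fun v hv =>
      Finset.mem_filter.2 ⟨hv, Relation.ReflTransGen.refl⟩
    have hRC : ∀ u v w, v ∈ C u → R v w → w ∈ X → w ∈ C u := by
      intro u v w hv hvw hwX
      rcases Finset.mem_filter.1 hv with ⟨-, huv⟩
      exact Finset.mem_filter.2 ⟨hwX, huv.trans hvw⟩
    have hclosed : ∀ u v w, v ∈ C u → stp v w → w ∈ C u := by
      intro u v w hv hs
      exact hRC u v w hv (Relation.ReflTransGen.single hs) hs.2.1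
    have hCeqOf : ∀ u v, u ∈ X → v ∈ C u → C v = C u := by
      intro u v hu hv
      rcases Finset.mem_filter.1 hv with ⟨hvX, huv⟩
      ext w
      simp only [hCdef, Finset.mem_filter]
      exact ⟨fun h => ⟨h.1, huv.trans h.2⟩, fun h => ⟨h.1, (hRsymm huv).trans h.2⟩⟩
    set CS : Finset (Finset Γ.V) := X.image C with hCSdef
    have hCSsub : ∀ c ∈ CS, c ⊆ X := by
      intro c hc
      rcases Finset.mem_image.1 hc with ⟨u, -, rfl⟩
      exact hCX u
    have hCSne : CS.Nonempty := hXne.image C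
    have hCSdisj : ∀ c₁ ∈ CS, ∀ c₂ ∈ CS, c₁ ≠ c₂ → Disjoint c₁ c₂ := by
      intro c₁ h₁ c₂ h₂ hne
      rcases Finset.mem_image.1 h₁ with ⟨u, hu, rfl⟩
      rcases Finset.mem_image.1 h₂ with ⟨v, hv, rfl⟩
      rw [Finset.disjoint_left]
      intro w hw₁ hw₂
      exact hne ((hCeqOf u w hu hw₁).symm.trans (hCeqOf v w hv hw₂))
    have hXbiUnion : X = CS.biUnion id := by
      ext x
      simp only [Finset.mem_biUnion, id]
      constructor
      · intro hx
        exact ⟨C x, Finset.mem_image_of_mem C hx, hmemC x hx⟩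
      · rintro ⟨c, hc, hx⟩
        exact hCSsub c hc hx
    -- boundary edges as a Finset
    set EbF : Finset Γ.V → Finset Γ.E := fun S =>
      (S.biUnion inc).filter (fun e => Xor' ((Γ.ends e).1 ∈ S) ((Γ.ends e).2 ∈ S))
      with hEbFdef
    have hEbF_coe : ∀ S : Finset Γ.V, (Γ.Eb (↑S : Set Γ.V)) = ↑(EbF S) := by
      intro S
      ext e
      simp only [MetricGraph.Eb, Set.mem_setOf_eq, hEbFdef, Finset.coe_filter,
        Finset.mem_biUnion, Finset.mem_coe]
      constructor
      · intro hx
        refine ⟨?_, hx⟩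
        rcases hx with ⟨h1, -⟩ | ⟨h2, -⟩
        · exact ⟨_, h1, mem_inc.2 (Or.inl rfl)⟩
        · exact ⟨_, h2, mem_inc.2 (Or.inr rfl)⟩
      · exact fun h => h.2
    have hncard : ∀ S : Finset Γ.V, (Γ.Eb (↑S : Set Γ.V)).ncard = (EbF S).card := by
      intro S
      rw [hEbF_coe S]
      exact Set.ncard_coe_finset _
    have hEbC : ∀ u ∈ X, ∀ e ∈ EbF (C u),
        ((Γ.ends e).1 ∈ C u ∧ (Γ.ends e).2 ∉ X) ∨
        ((Γ.ends e).2 ∈ C u ∧ (Γ.ends e).1 ∉ X) := by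
      intro u hu e he
      rcases Finset.mem_filter.1 he with ⟨-, hx⟩
      rcases hx with ⟨h1, h2⟩ | ⟨h2, h1⟩
      · refine Or.inl ⟨h1, fun h2X => h2 ?_⟩
        exact hclosed u _ _ h1 ⟨hCX u h1, h2X, e, Or.inl rfl⟩
      · refine Or.inr ⟨h2, fun h1X => h1 ?_⟩
        exact hclosed u _ _ h2 ⟨hCX u h2, h1X, e, Or.inr rfl⟩
    have hEbX : EbF X = CS.biUnion EbF := by
      ext e
      simp only [Finset.mem_biUnion]
      constructor
      · intro he
        rcases Finset.mem_filter.1 he with ⟨-, hx⟩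
        rcases hx with ⟨h1, h2⟩ | ⟨h2, h1⟩
        · refine ⟨C (Γ.ends e).1, Finset.mem_image_of_mem C h1, Finset.mem_filter.2 ⟨?_, ?_⟩⟩
          · exact Finset.mem_biUnion.2 ⟨_, hmemC _ h1, mem_inc.2 (Or.inl rfl)⟩
          · exact Or.inl ⟨hmemC _ h1, fun hc => h2 (hCX _ hc)⟩
        · refine ⟨C (Γ.ends e).2, Finset.mem_image_of_mem C h2, Finset.mem_filter.2 ⟨?_, ?_⟩⟩
          · exact Finset.mem_biUnion.2 ⟨_, hmemC _ h2, mem_inc.2 (Or.inr rfl)⟩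
          · exact Or.inr ⟨hmemC _ h2, fun hc => h1 (hCX _ hc)⟩
      · rintro ⟨c, hc, he⟩
        rcases Finset.mem_image.1 hc with ⟨u, hu, rfl⟩
        rcases hEbC u hu e he with ⟨h1, h2⟩ | ⟨h2, h1⟩
        · refine Finset.mem_filter.2 ⟨?_, Or.inl ⟨hCX u h1, h2⟩⟩
          exact Finset.mem_biUnion.2 ⟨_, hCX u h1, mem_inc.2 (Or.inl rfl)⟩
        · refine Finset.mem_filter.2 ⟨?_, Or.inr ⟨hCX u h2, h1⟩⟩
          exact Finset.mem_biUnion.2 ⟨_, hCX u h2, mem_inc.2 (Or.inr rfl)⟩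
    have hEbdisj : ∀ c₁ ∈ CS, ∀ c₂ ∈ CS, c₁ ≠ c₂ → Disjoint (EbF c₁) (EbF c₂) := by
      intro c₁ h₁ c₂ h₂ hne
      rcases Finset.mem_image.1 h₁ with ⟨u, hu, rfl⟩
      rcases Finset.mem_image.1 h₂ with ⟨v, hv, rfl⟩
      rw [Finset.disjoint_left]
      intro e he₁ he₂
      apply hne
      rcases hEbC u hu e he₁ with ⟨hu1, hx1⟩ | ⟨hu2, hx2⟩ <;>
        rcases hEbC v hv e he₂ with ⟨hv1, hy1⟩ | ⟨hv2, hy2⟩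
      · exact (hCeqOf u _ hu hu1).symm.trans (hCeqOf v _ hv hv1)
      · exact absurd (hCX u hu1) hy2
      · exact absurd (hCX v hv1) hx2
      · exact (hCeqOf u _ hu hu2).symm.trans (hCeqOf v _ hv hv2)
    have hEbcard : (EbF X).card = ∑ c ∈ CS, (EbF c).card := by
      rw [hEbX]
      exact Finset.card_biUnion hEbdisj
    have hmsum : ∑ v ∈ X, Γ.mweight v = ∑ c ∈ CS, ∑ v ∈ c, Γ.mweight v := by
      conv_lhs => rw [hXbiUnion]
      refine Finset.sum_biUnion ?_
      intro c₁ h₁ c₂ h₂ hne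
      exact hCSdisj c₁ h₁ c₂ h₂ hne
    have hcne : ∀ c ∈ CS, c.Nonempty := by
      intro c hc
      rcases Finset.mem_image.1 hc with ⟨u, hu, rfl⟩
      exact ⟨u, hmemC u hu⟩
    have hgpos : ∀ c ∈ CS, 0 < ∑ v ∈ c, Γ.mweight v :=
      fun c hc => Finset.sum_pos (fun v _ => MGaux.mweight_pos Γ v) (hcne c hc)
    obtain ⟨Y, hYCS, hYratio⟩ := MGaux.ratio_min CS hCSne
      (fun c => ((EbF c).card : ℝ)) (fun c => ∑ v ∈ c, Γ.mweight v) hgpos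
    obtain ⟨u₀, hu₀X, hCu₀⟩ := Finset.mem_image.1 hYCS
    have hu₀Y : u₀ ∈ Y := hCu₀ ▸ hmemC u₀ hu₀X
    have hYne : Y.Nonempty := ⟨u₀, hu₀Y⟩
    have hmYpos : 0 < ∑ v ∈ Y, Γ.mweight v := hgpos Y hYCS
    have hYratio' : ((EbF Y).card : ℝ) / ∑ v ∈ Y, Γ.mweight v ≤
        ((EbF X).card : ℝ) / ∑ v ∈ X, Γ.mweight v := by
      refine hYratio.trans (le_of_eq ?_)
      rw [hmsum, hEbcard]
      push_cast
      rfl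
    -- the finite subgraph: all edges incident to Y
    set F : Finset Γ.E := Y.biUnion inc with hFdef
    have hincF : ∀ v ∈ Y, inc v ⊆ F := fun v hv => Finset.subset_biUnion_of_mem inc hv
    have hFe : ∀ e ∈ F, ∃ v ∈ Y, ((Γ.ends e).1 = v ∨ (Γ.ends e).2 = v) := by
      intro e he
      rcases Finset.mem_biUnion.1 he with ⟨v, hv, hev⟩
      exact ⟨v, hv, mem_inc.1 hev⟩
    have hFne : F.Nonempty := by
      obtain ⟨e, he⟩ := MGaux.exists_incident Γ u₀
      exact ⟨e, hincF u₀ hu₀Y he⟩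
    have hmespos : 0 < Γ.mes F := Finset.sum_pos (fun e _ => Γ.len_pos e) hFne
    -- mes bound : m(Y) ≤ 2 mes F
    have hmesY : ∑ v ∈ Y, Γ.mweight v ≤ 2 * Γ.mes F := by
      have step1 : ∀ v ∈ Y, Γ.mweight v = ∑ e ∈ F, (if e ∈ inc v then Γ.len e else 0) := by
        intro v hv
        rw [MetricGraph.mweight, ← Finset.sum_filter]
        congr 1
        ext e
        simp only [Finset.mem_filter]
        exact ⟨fun h => ⟨hincF v hv (mem_inc.2 (mem_inc.1 h)), h⟩, fun h => h.2⟩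
      calc ∑ v ∈ Y, Γ.mweight v
          = ∑ v ∈ Y, ∑ e ∈ F, (if e ∈ inc v then Γ.len e else 0) :=
            Finset.sum_congr rfl step1
        _ = ∑ e ∈ F, ∑ v ∈ Y, (if e ∈ inc v then Γ.len e else 0) := Finset.sum_comm
        _ ≤ ∑ e ∈ F, 2 * Γ.len e := by
            refine Finset.sum_le_sum fun e _ => ?_
            rw [← Finset.sum_filter, Finset.sum_const, nsmul_eq_mul]
            refine mul_le_mul_of_nonneg_right ?_ (Γ.len_pos e).le
            have hsub : Y.filter (fun v => e ∈ inc v) ⊆ {(Γ.ends e).1, (Γ.ends e).2} := by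
              intro v hv
              rcases mem_inc.1 (Finset.mem_filter.1 hv).2 with h | h
              · exact Finset.mem_insert.2 (Or.inl h.symm)
              · exact Finset.mem_insert.2 (Or.inr (Finset.mem_singleton.2 h.symm))
            have := Finset.card_le_card hsub
            have h2 : ({(Γ.ends e).1, (Γ.ends e).2} : Finset Γ.V).card ≤ 2 :=
              (Finset.card_insert_le _ _).trans (by simp)
            exact_mod_cast this.trans h2
        _ = 2 * Γ.mes F := by rw [MetricGraph.mes, Finset.mul_sum]
    -- degree bound : degBdry F ≤ #EbF Y
    have hdegIn_full : ∀ v ∈ Y, Γ.degIn F v = Γ.degree v := by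
      intro v hv
      rw [MetricGraph.degIn, MetricGraph.degree]
      congr 1
      ext e
      simp only [Finset.mem_filter]
      constructor
      · rintro ⟨-, h⟩
        exact mem_inc.2 h
      · intro h
        exact ⟨hincF v hv h, mem_inc.1 h⟩
    have hbdry_notY : ∀ v ∈ Γ.bdry F, v ∉ Y := by
      intro v hv hvY
      have h := (Finset.mem_filter.1 hv).2
      rw [hdegIn_full v hvY] at h
      exact lt_irrefl _ h
    have hdeg_nat : ∑ v ∈ Γ.bdry F, Γ.degIn F v ≤ (EbF Y).card := by
      have hswap : ∑ v ∈ Γ.bdry F, Γ.degIn F v =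
          ∑ e ∈ F, (Γ.bdry F |>.filter (fun v => (Γ.ends e).1 = v ∨ (Γ.ends e).2 = v)).card := by
        calc ∑ v ∈ Γ.bdry F, Γ.degIn F v
            = ∑ v ∈ Γ.bdry F, ∑ e ∈ F,
                (if (Γ.ends e).1 = v ∨ (Γ.ends e).2 = v then 1 else 0) := by
              refine Finset.sum_congr rfl fun v _ => ?_
              rw [MetricGraph.degIn, Finset.card_filter]
          _ = ∑ e ∈ F, ∑ v ∈ Γ.bdry F,
                (if (Γ.ends e).1 = v ∨ (Γ.ends e).2 = v then 1 else 0) := Finset.sum_comm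
          _ = _ := by
              refine Finset.sum_congr rfl fun e _ => ?_
              rw [Finset.card_filter]
      rw [hswap]
      calc ∑ e ∈ F, (Γ.bdry F |>.filter (fun v => (Γ.ends e).1 = v ∨ (Γ.ends e).2 = v)).card
          ≤ ∑ e ∈ F, (if e ∈ EbF Y then 1 else 0) := by
            refine Finset.sum_le_sum fun e he => ?_
            obtain ⟨y, hyY, hy⟩ := hFe e he
            by_cases h1 : (Γ.ends e).1 ∈ Y <;> by_cases h2 : (Γ.ends e).2 ∈ Y
            · have : (Γ.bdry F |>.filter
                  (fun v => (Γ.ends e).1 = v ∨ (Γ.ends e).2 = v)) = ∅ := by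
                refine Finset.filter_eq_empty_iff.2 fun v hv => ?_
                rintro (rfl | rfl)
                · exact hbdry_notY _ hv h1
                · exact hbdry_notY _ hv h2
              simp [this]
            · have heEb : e ∈ EbF Y := by
                rw [hEbFdef]
                exact Finset.mem_filter.2 ⟨he, Or.inl ⟨h1, h2⟩⟩
              rw [if_pos heEb]
              refine Finset.card_le_one.2 fun a ha b hb => ?_
              have ha' := Finset.mem_filter.1 ha
              have hb' := Finset.mem_filter.1 hb
              have haa : a = (Γ.ends e).2 := by
                rcases ha'.2 with h | h
                · exact absurd (h ▸ h1) (hbdry_notY a ha'.1)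
                · exact h.symm
              have hbb : b = (Γ.ends e).2 := by
                rcases hb'.2 with h | h
                · exact absurd (h ▸ h1) (hbdry_notY b hb'.1)
                · exact h.symm
              rw [haa, hbb]
            · have heEb : e ∈ EbF Y := by
                rw [hEbFdef]
                exact Finset.mem_filter.2 ⟨he, Or.inr ⟨h2, h1⟩⟩
              rw [if_pos heEb]
              refine Finset.card_le_one.2 fun a ha b hb => ?_
              have ha' := Finset.mem_filter.1 ha
              have hb' := Finset.mem_filter.1 hb
              have haa : a = (Γ.ends e).1 := by
                rcases ha'.2 with h | h
                · exact h.symm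
                · exact absurd (h ▸ h2) (hbdry_notY a ha'.1)
              have hbb : b = (Γ.ends e).1 := by
                rcases hb'.2 with h | h
                · exact h.symm
                · exact absurd (h ▸ h2) (hbdry_notY b hb'.1)
              rw [haa, hbb]
            · rcases hy with h | h
              · exact absurd (h ▸ hyY) h1
              · exact absurd (h ▸ hyY) h2
        _ = (F.filter (fun e => e ∈ EbF Y)).card := (Finset.card_filter _ _).symm
        _ ≤ (EbF Y).card := Finset.card_le_card fun e he => (Finset.mem_filter.1 he).2
    have hdegB : Γ.degBdry F ≤ ((EbF Y).card : ℝ) := by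
      rw [MetricGraph.degBdry]
      exact_mod_cast hdeg_nat
    -- connectivity of the subgraph
    have hconn : Γ.SubConn F := by
      rw [MetricGraph.SubConn, SimpleGraph.connected_iff]
      set H : SimpleGraph Γ.V := SimpleGraph.fromRel fun u v => ∃ e ∈ F, Γ.ends e = (u, v)
        with hHdef
      have hvertsmem : ∀ e ∈ F, (Γ.ends e).1 ∈ Γ.vertsOf F ∧ (Γ.ends e).2 ∈ Γ.vertsOf F := by
        intro e he
        exact ⟨Finset.mem_union_left _ (Finset.mem_image_of_mem _ he),
          Finset.mem_union_right _ (Finset.mem_image_of_mem _ he)⟩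
      have hYmem : ∀ v ∈ Y, v ∈ Γ.vertsOf F := by
        intro v hv
        obtain ⟨e, he⟩ := MGaux.exists_incident Γ v
        have heF : e ∈ F := hincF v hv he
        rcases mem_inc.1 (show e ∈ inc v from he) with h | h
        · exact h ▸ (hvertsmem e heF).1
        · exact h ▸ (hvertsmem e heF).2
      have hadj : ∀ u v : Γ.V, u ≠ v → ∀ e ∈ F,
          ((Γ.ends e).1 = u ∨ (Γ.ends e).2 = u) → ((Γ.ends e).1 = v ∨ (Γ.ends e).2 = v) →
          H.Adj u v := by
        intro u v hne e he hu hv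
        rw [hHdef, SimpleGraph.fromRel_adj]
        refine ⟨hne, ?_⟩
        rcases hu with hu | hu <;> rcases hv with hv | hv
        · exact absurd (hu.symm.trans hv) hne
        · exact Or.inl ⟨e, he, Prod.ext hu hv⟩
        · exact Or.inr ⟨e, he, Prod.ext hv hu⟩
        · exact absurd (hu.symm.trans hv) hne
      have hadj' : ∀ (a b : (↑(Γ.vertsOf F) : Set Γ.V)), H.Adj ↑a ↑b →
          (H.induce (↑(Γ.vertsOf F) : Set Γ.V)).Adj a b := fun a b h => h
      -- reachability from u₀ to any vertex of Y
      have key : ∀ v : Γ.V, R u₀ v → v ∈ Y → ∀ hv : v ∈ Γ.vertsOf F,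
          (H.induce (↑(Γ.vertsOf F) : Set Γ.V)).Reachable
            ⟨u₀, hYmem u₀ hu₀Y⟩ ⟨v, hv⟩ := by
        intro v hR
        induction hR with
        | refl => intro _ _; rfl
        | @tail b c hab hbc ih =>
          intro hcY hvc
          have hbY : b ∈ Y := by
            rw [← hCu₀]
            exact Finset.mem_filter.2 ⟨hbc.1, hab⟩
          have hbmem := hYmem b hbY
          have ihb := ih hbY hbmem
          rcases hbc with ⟨hbX, hcX, e, he⟩
          have hendb : (Γ.ends e).1 = b ∨ (Γ.ends e).2 = b := by
            rcases he with h | h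
            · exact Or.inl (by rw [h])
            · exact Or.inr (by rw [h])
          have hendc : (Γ.ends e).1 = c ∨ (Γ.ends e).2 = c := by
            rcases he with h | h
            · exact Or.inr (by rw [h])
            · exact Or.inl (by rw [h])
          have heF : e ∈ F := by
            refine hincF b hbY ?_
            exact mem_inc.2 hendb
          by_cases hbcne : b = c
          · subst hbcne
            exact ih hbY hvc
          · exact ihb.trans
              (SimpleGraph.Adj.reachable
                (hadj' ⟨b, hbmem⟩ ⟨c, hvc⟩ (hadj b c hbcne e heF hendb hendc)))
      have toY : ∀ a : (↑(Γ.vertsOf F) : Set Γ.V), ∃ y, ∃ hy : y ∈ Y,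
          (H.induce (↑(Γ.vertsOf F) : Set Γ.V)).Reachable a ⟨y, hYmem y hy⟩ := by
        rintro ⟨a, ha⟩
        have ha' : a ∈ Γ.vertsOf F := ha
        have hex : ∃ e ∈ F, ((Γ.ends e).1 = a ∨ (Γ.ends e).2 = a) := by
          rcases Finset.mem_union.1 ha' with h | h
          · rcases Finset.mem_image.1 h with ⟨e, he, hea⟩
            exact ⟨e, he, Or.inl hea⟩
          · rcases Finset.mem_image.1 h with ⟨e, he, hea⟩
            exact ⟨e, he, Or.inr hea⟩
        obtain ⟨e, heF, hend⟩ := hex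
        obtain ⟨y, hyY, hyend⟩ := hFe e heF
        by_cases hay : a = y
        · subst hay
          exact ⟨a, hyY, by rfl⟩
        · exact ⟨y, hyY,
            SimpleGraph.Adj.reachable
              (hadj' ⟨a, ha⟩ ⟨y, hYmem y hyY⟩ (hadj a y hay e heF hend hyend))⟩
      constructor
      · intro a b
        obtain ⟨ya, hya, hra⟩ := toY a
        obtain ⟨yb, hyb, hrb⟩ := toY b
        have hRya : R u₀ ya := (Finset.mem_filter.1 (hCu₀ ▸ hya)).2
        have hRyb : R u₀ yb := (Finset.mem_filter.1 (hCu₀ ▸ hyb)).2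
        have h1 := key ya hRya hya (hYmem ya hya)
        have h2 := key yb hRyb hyb (hYmem yb hyb)
        exact ((hra.trans h1.symm).trans h2).trans hrb.symm
      · exact ⟨⟨u₀, hYmem u₀ hu₀Y⟩⟩
    -- conclusion
    have hmemS : Γ.degBdry F / Γ.mes F ∈ {r : ℝ | ∃ F : Finset Γ.E,
        Γ.IsFinSubgraph F ∧ r = Γ.degBdry F / Γ.mes F} := ⟨F, ⟨hFne, hconn⟩, rfl⟩
    have halpha : Γ.alpha ≤ Γ.degBdry F / Γ.mes F := csInf_le hSbdd hmemS
    have hchain : Γ.degBdry F / Γ.mes F ≤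
        2 * (((EbF Y).card : ℝ) / ∑ v ∈ Y, Γ.mweight v) := by
      have hhalf : 0 < (∑ v ∈ Y, Γ.mweight v) / 2 := by linarith
      have hle : (∑ v ∈ Y, Γ.mweight v) / 2 ≤ Γ.mes F := by linarith
      have h1 : Γ.degBdry F / Γ.mes F ≤
          ((EbF Y).card : ℝ) / ((∑ v ∈ Y, Γ.mweight v) / 2) :=
        div_le_div₀ (Nat.cast_nonneg _) hdegB hhalf hle
      have h2 : ((EbF Y).card : ℝ) / ((∑ v ∈ Y, Γ.mweight v) / 2) =
          2 * (((EbF Y).card : ℝ) / ∑ v ∈ Y, Γ.mweight v) := by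
        rw [div_div_eq_mul_div]
        ring
      linarith
    have hfinal : 2 * (((EbF Y).card : ℝ) / ∑ v ∈ Y, Γ.mweight v) ≤
        2 * (((Γ.Eb (↑X : Set Γ.V)).ncard : ℝ) / ∑ v ∈ X, Γ.mweight v) := by
      rw [hncard X]
      linarith [hYratio']
    linarith
  have h2 : Γ.alpha / 2 ≤ Γ.alphaD Set.univ := by
    refine le_csInf hTne fun t ht => ?_
    linarith [main t ht]
  linarith
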